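/- Fix integers N ≥ 0 and ℓ ≥ 0 and real numbers x, y. In the formal power series ring ℝ⟦t⟧, the identity Σ_{k≥0} ( P_k^{(N+ℓ, −ℓ/2)}(x,y) / (k!·(k+1)!) ) t^k = (1 + t)^ℓ · Σ_{k≥0} ( P_k^{(N, ℓ/2)}(x,y) / (k!·(k+1)!) ) t^k holds. -/

import Mathlib

/-- The constraint polynomials `P_k^{(N,ε)}(x,y)` of the asymmetric quantum Rabi model,
as real-valued functions, defined by the three-term recurrence. -/
def constraintPoly (N : ℕ) (ε x y : ℝ) : ℕ → ℝ
  | 0 => 1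
  | 1 => x + y - 1 - 2 * ε
  | k + 2 =>
      (((k : ℝ) + 2) * x + y - ((k : ℝ) + 2) * (((k : ℝ) + 2) + 2 * ε)) *
          constraintPoly N ε x y (k + 1) -
        ((k : ℝ) + 2) * ((k : ℝ) + 1) * ((N : ℝ) - ((k : ℝ) + 1)) * x *
          constraintPoly N ε x y k

namespace GenFunShiftAux

open Finset PowerSeries

/-- Normalized values `P_k/(k!(k+1)!)`, extended by zero to negative integer indices. -/
noncomputable def pc (M : ℕ) (ε x y : ℝ) (n : ℤ) : ℝ :=
  if 0 ≤ n then
    constraintPoly M ε x y n.toNat /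
      ((n.toNat.factorial : ℝ) * ((n.toNat + 1).factorial : ℝ))
  else 0

lemma pc_neg (M : ℕ) (ε x y : ℝ) {n : ℤ} (h : n < 0) : pc M ε x y n = 0 := by
  simp [pc, not_le.mpr h]

lemma pc_coe (M : ℕ) (ε x y : ℝ) (k : ℕ) :
    pc M ε x y (k : ℤ) =
      constraintPoly M ε x y k /
        ((k.factorial : ℝ) * ((k + 1).factorial : ℝ)) := by
  simp [pc]

lemma pc_rec (M : ℕ) (ε x y : ℝ) (n : ℤ) :
    (n : ℝ) * ((n : ℝ) + 1) * pc M ε x y n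
      = ((n : ℝ) * x + y - (n : ℝ) * ((n : ℝ) + 2 * ε)) * pc M ε x y (n - 1)
        - ((M : ℝ) - (n : ℝ) + 1) * x * pc M ε x y (n - 2) := by
  rcases lt_or_ge n 0 with h | h
  · rw [pc_neg _ _ _ _ h, pc_neg _ _ _ _ (by omega), pc_neg _ _ _ _ (by omega)]
    ring
  · obtain ⟨k, rfl⟩ := Int.eq_ofNat_of_zero_le h
    match k with
    | 0 =>
        rw [show pc M ε x y (((0 : ℕ) : ℤ) - 1) = 0 from pc_neg _ _ _ _ (by norm_num),
          show pc M ε x y (((0 : ℕ) : ℤ) - 2) = 0 from pc_neg _ _ _ _ (by norm_num)]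
        norm_num
    | 1 =>
        have h0 : ((1 : ℕ) : ℤ) - 1 = ((0 : ℕ) : ℤ) := by norm_num
        rw [h0, show pc M ε x y (((1 : ℕ) : ℤ) - 2) = 0 from pc_neg _ _ _ _ (by norm_num),
          pc_coe, pc_coe]
        simp [constraintPoly, Nat.factorial]
        ring
    | (m + 2) =>
        have h1 : ((m + 2 : ℕ) : ℤ) - 1 = ((m + 1 : ℕ) : ℤ) := by push_cast; ring
        have h2 : ((m + 2 : ℕ) : ℤ) - 2 = ((m : ℕ) : ℤ) := by push_cast; ring
        rw [h1, h2, pc_coe, pc_coe, pc_coe]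
        have hrec : constraintPoly M ε x y (m + 2)
            = (((m : ℝ) + 2) * x + y - ((m : ℝ) + 2) * (((m : ℝ) + 2) + 2 * ε)) *
                constraintPoly M ε x y (m + 1) -
              ((m : ℝ) + 2) * ((m : ℝ) + 1) * ((M : ℝ) - ((m : ℝ) + 1)) * x *
                constraintPoly M ε x y m := rfl
        rw [hrec]
        have f1 : ((m + 1).factorial : ℝ) = ((m : ℝ) + 1) * (m.factorial : ℝ) := by
          rw [Nat.factorial_succ]; push_cast; ring
        have f2 : ((m + 2).factorial : ℝ) = ((m : ℝ) + 2) * ((m + 1).factorial : ℝ) := by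
          rw [show m + 2 = (m + 1) + 1 from rfl, Nat.factorial_succ]; push_cast; ring
        have f3 : ((m + 2 + 1).factorial : ℝ) = ((m : ℝ) + 3) * ((m + 2).factorial : ℝ) := by
          rw [show m + 2 + 1 = (m + 2) + 1 from rfl, Nat.factorial_succ]; push_cast; ring
        have hf0 : (m.factorial : ℝ) ≠ 0 := by
          exact_mod_cast m.factorial_ne_zero
        rw [f3, f2, f1]
        push_cast
        field_simp
        ring

/-- The binomial shift identity for sums. -/
lemma binom_shift (ℓ : ℕ) (u : ℕ → ℝ) :
    ∑ j ∈ range (ℓ + 1), (ℓ.choose j : ℝ) * (j : ℝ) * u j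
      = ∑ j ∈ range (ℓ + 1), (ℓ.choose j : ℝ) * ((ℓ : ℝ) - (j : ℝ)) * u (j + 1) := by
  rw [Finset.sum_range_succ' (fun j => (ℓ.choose j : ℝ) * (j : ℝ) * u j) ℓ,
    Finset.sum_range_succ]
  simp only [Nat.cast_zero, mul_zero, zero_mul, add_zero, sub_self]
  apply Finset.sum_congr rfl
  intro j hj
  have hj' : j < ℓ := mem_range.mp hj
  have h := Nat.choose_succ_right_eq ℓ j
  have h' : ((ℓ.choose (j + 1)) : ℝ) * ((j : ℝ) + 1)
      = (ℓ.choose j : ℝ) * ((ℓ : ℝ) - (j : ℝ)) := by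
    have hc : (((ℓ.choose (j + 1)) * (j + 1) : ℕ) : ℝ) = ((ℓ.choose j * (ℓ - j) : ℕ) : ℝ) := by
      exact_mod_cast congrArg (Nat.cast : ℕ → ℝ) h
    push_cast [Nat.cast_sub hj'.le] at hc
    linarith [hc]
  push_cast
  linear_combination u (j + 1) * h'

section Main

variable (N ℓ : ℕ) (x y : ℝ)

/-- The binomial convolution of the `(N, ℓ/2)` family. -/
noncomputable def cseq (n : ℤ) : ℝ :=
  ∑ j ∈ range (ℓ + 1), (ℓ.choose j : ℝ) * pc N ((ℓ : ℝ) / 2) x y (n - j)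

lemma cseq_rec (n : ℤ) :
    (n : ℝ) * ((n : ℝ) + 1) * cseq N ℓ x y n
      = ((n : ℝ) * x + y - (n : ℝ) ^ 2 + (n : ℝ) * (ℓ : ℝ)) * cseq N ℓ x y (n - 1)
        - (((N : ℝ) + (ℓ : ℝ)) - (n : ℝ) + 1) * x * cseq N ℓ x y (n - 2) := by
  classical
  set w : ℕ → ℝ := fun j => pc N ((ℓ : ℝ) / 2) x y (n - j) with hw
  have hw1 : ∀ j : ℕ, pc N ((ℓ : ℝ) / 2) x y (n - 1 - j) = w (j + 1) := by
    intro j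
    simp only [hw]
    congr 1
    push_cast; ring
  have hw2 : ∀ j : ℕ, pc N ((ℓ : ℝ) / 2) x y (n - 2 - j) = w (j + 2) := by
    intro j
    simp only [hw]
    congr 1
    push_cast; ring
  have hbw : ∀ j : ℕ,
      ((n : ℝ) - j) * (((n : ℝ) - j) + 1) * w j
        = (((n : ℝ) - j) * x + y - ((n : ℝ) - j) * (((n : ℝ) - j) + (ℓ : ℝ))) * w (j + 1)
          - ((N : ℝ) - ((n : ℝ) - j) + 1) * x * w (j + 2) := by
    intro j
    have h := pc_rec N ((ℓ : ℝ) / 2) x y (n - j)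
    have a1 : n - (j : ℤ) - 1 = n - ((j + 1 : ℕ) : ℤ) := by push_cast; ring
    have a2 : n - (j : ℤ) - 2 = n - ((j + 2 : ℕ) : ℤ) := by push_cast; ring
    rw [a1, a2] at h
    simp only [hw]
    push_cast at h ⊢
    linear_combination h
  have expand : (n : ℝ) * ((n : ℝ) + 1) * cseq N ℓ x y n
      - (((n : ℝ) * x + y - (n : ℝ) ^ 2 + (n : ℝ) * (ℓ : ℝ)) * cseq N ℓ x y (n - 1)
        - (((N : ℝ) + (ℓ : ℝ)) - (n : ℝ) + 1) * x * cseq N ℓ x y (n - 2))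
      = ∑ j ∈ range (ℓ + 1),
          ((ℓ.choose j : ℝ) * ((n : ℝ) * ((n : ℝ) + 1) * w j)
            - ((ℓ.choose j : ℝ) *
                (((n : ℝ) * x + y - (n : ℝ) ^ 2 + (n : ℝ) * (ℓ : ℝ)) * w (j + 1))
              - (ℓ.choose j : ℝ) *
                ((((N : ℝ) + (ℓ : ℝ)) - (n : ℝ) + 1) * x * w (j + 2)))) := by
    simp only [cseq, hw1, hw2, Finset.mul_sum, ← Finset.sum_sub_distrib]
    apply Finset.sum_congr rfl
    intro j _
    simp only [hw]
    ring
  rw [← sub_eq_zero, expand]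
  have split : ∀ j ∈ range (ℓ + 1),
      ((ℓ.choose j : ℝ) * ((n : ℝ) * ((n : ℝ) + 1) * w j)
        - ((ℓ.choose j : ℝ) *
            (((n : ℝ) * x + y - (n : ℝ) ^ 2 + (n : ℝ) * (ℓ : ℝ)) * w (j + 1))
          - (ℓ.choose j : ℝ) *
            ((((N : ℝ) + (ℓ : ℝ)) - (n : ℝ) + 1) * x * w (j + 2))))
      = ((ℓ.choose j : ℝ) * (j : ℝ) * ((2 * (n : ℝ) + 1 - (j : ℝ)) * w j)
          - (ℓ.choose j : ℝ) * ((ℓ : ℝ) - (j : ℝ)) *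
            ((2 * (n : ℝ) + 1 - ((j : ℝ) + 1)) * w (j + 1)))
        + ((ℓ.choose j : ℝ) * ((ℓ : ℝ) - (j : ℝ)) * (x * w (j + 1 + 1))
          - (ℓ.choose j : ℝ) * (j : ℝ) * (x * w (j + 1))) := by
    intro j _
    have h := hbw j
    linear_combination (ℓ.choose j : ℝ) * h
  rw [Finset.sum_congr rfl split, Finset.sum_add_distrib,
    Finset.sum_sub_distrib, Finset.sum_sub_distrib]
  have k1 := binom_shift ℓ (fun j => (2 * (n : ℝ) + 1 - (j : ℝ)) * w j)
  have k2 := binom_shift ℓ (fun j => x * w (j + 1))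
  push_cast at k1 k2
  rw [k1, k2]
  ring

lemma cseq_neg {n : ℤ} (h : n < 0) : cseq N ℓ x y n = 0 := by
  apply Finset.sum_eq_zero
  intro j _
  rw [pc_neg _ _ _ _ (by omega)]
  ring

lemma cseq_zero : cseq N ℓ x y 0 = 1 := by
  rw [cseq, Finset.sum_eq_single 0]
  · rw [show (0 : ℤ) - ((0 : ℕ) : ℤ) = ((0 : ℕ) : ℤ) by norm_num, pc_coe]
    simp [constraintPoly, Nat.factorial]
  · intro j _ hj
    rw [pc_neg _ _ _ _ (by omega)]
    ring
  · intro h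
    exact absurd (mem_range.mpr (Nat.succ_pos ℓ)) h

lemma a_eq_cseq : ∀ k : ℕ, pc (N + ℓ) (-(ℓ : ℝ) / 2) x y (k : ℤ) = cseq N ℓ x y (k : ℤ) := by
  intro k
  induction k using Nat.strong_induction_on with
  | _ k ih =>
    match k with
    | 0 =>
        rw [show ((0 : ℕ) : ℤ) = (0 : ℤ) from rfl, cseq_zero]
        have := pc_coe (N + ℓ) (-(ℓ : ℝ) / 2) x y 0
        rw [show ((0 : ℕ) : ℤ) = (0 : ℤ) from rfl] at this
        rw [this]
        simp [constraintPoly, Nat.factorial]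
    | (m + 1) =>
        have hprev : ∀ z : ℤ, z < ((m + 1 : ℕ) : ℤ) →
            pc (N + ℓ) (-(ℓ : ℝ) / 2) x y z = cseq N ℓ x y z := by
          intro z hz
          rcases lt_or_ge z 0 with h0 | h0
          · rw [pc_neg _ _ _ _ h0, cseq_neg _ _ _ _ h0]
          · obtain ⟨k', rfl⟩ := Int.eq_ofNat_of_zero_le h0
            exact ih k' (by exact_mod_cast hz)
        have hA := pc_rec (N + ℓ) (-(ℓ : ℝ) / 2) x y ((m + 1 : ℕ) : ℤ)
        have hC := cseq_rec N ℓ x y ((m + 1 : ℕ) : ℤ)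
        rw [hprev (((m + 1 : ℕ) : ℤ) - 1) (by omega),
          hprev (((m + 1 : ℕ) : ℤ) - 2) (by omega)] at hA
        have hmul : (((m + 1 : ℕ) : ℤ) : ℝ) * ((((m + 1 : ℕ) : ℤ) : ℝ) + 1) *
            pc (N + ℓ) (-(ℓ : ℝ) / 2) x y ((m + 1 : ℕ) : ℤ)
            = (((m + 1 : ℕ) : ℤ) : ℝ) * ((((m + 1 : ℕ) : ℤ) : ℝ) + 1) *
              cseq N ℓ x y ((m + 1 : ℕ) : ℤ) := by
          push_cast at hA hC ⊢
          linear_combination hA - hC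
        have hne : (((m + 1 : ℕ) : ℤ) : ℝ) * ((((m + 1 : ℕ) : ℤ) : ℝ) + 1) ≠ 0 := by
          push_cast
          positivity
        exact mul_left_cancel₀ hne hmul

end Main

end GenFunShiftAux

/-- in `ℝ⟦t⟧`,
`Σ_k (P_k^{(N+ℓ,-ℓ/2)}(x,y)/(k!(k+1)!)) t^k = (1+t)^ℓ · Σ_k (P_k^{(N,ℓ/2)}(x,y)/(k!(k+1)!)) t^k`. -/
theorem genFun_shift_identity (N ℓ : ℕ) (x y : ℝ) :
    (PowerSeries.mk fun k =>
        constraintPoly (N + ℓ) (-(ℓ : ℝ) / 2) x y k /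
          ((k.factorial : ℝ) * ((k + 1).factorial : ℝ))) =
      (1 + PowerSeries.X) ^ ℓ *
        PowerSeries.mk fun k =>
          constraintPoly N ((ℓ : ℝ) / 2) x y k /
            ((k.factorial : ℝ) * ((k + 1).factorial : ℝ)) := by
  open GenFunShiftAux Finset PowerSeries in
  apply PowerSeries.ext
  intro k
  set f : ℝ⟦X⟧ := PowerSeries.mk fun k =>
    constraintPoly N ((ℓ : ℝ) / 2) x y k /
      ((k.factorial : ℝ) * ((k + 1).factorial : ℝ)) with hf
  have hpow : ((1 : ℝ⟦X⟧) + PowerSeries.X) ^ ℓ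
      = ∑ j ∈ Finset.range (ℓ + 1),
          PowerSeries.X ^ j * 1 ^ (ℓ - j) * (ℓ.choose j : ℝ⟦X⟧) := by
    rw [add_comm]
    exact add_pow PowerSeries.X 1 ℓ
  rw [hpow, Finset.sum_mul, map_sum]
  have hterm : ∀ j ∈ Finset.range (ℓ + 1),
      (PowerSeries.coeff k) (PowerSeries.X ^ j * 1 ^ (ℓ - j) * (ℓ.choose j : ℝ⟦X⟧) * f)
        = (ℓ.choose j : ℝ) * pc N ((ℓ : ℝ) / 2) x y ((k : ℤ) - (j : ℤ)) := by
    intro j _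
    have hre : PowerSeries.X ^ j * 1 ^ (ℓ - j) * (ℓ.choose j : ℝ⟦X⟧) * f
        = (PowerSeries.C (R := ℝ)) ((ℓ.choose j : ℕ) : ℝ) * (f * PowerSeries.X ^ j) := by
      rw [map_natCast (PowerSeries.C (R := ℝ)) (ℓ.choose j)]
      ring
    rw [hre, PowerSeries.coeff_C_mul, PowerSeries.coeff_mul_X_pow']
    rcases le_or_gt j k with h | h
    · rw [if_pos h, hf, PowerSeries.coeff_mk,
        show (k : ℤ) - (j : ℤ) = ((k - j : ℕ) : ℤ) by omega, pc_coe]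
    · rw [if_neg (not_le.mpr h), pc_neg _ _ _ _ (by omega), mul_zero]
  rw [Finset.sum_congr rfl hterm, PowerSeries.coeff_mk]
  have := a_eq_cseq N ℓ x y k
  rw [pc_coe] at this
  rw [this]
  rfl
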